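/- The volume of the set of real unital qubit channels 𝒬_ℝ¹, identified with a convex subset of ℝ⁵ via the Choi parametrization with volume element 2⁴ dλ₅, equals 4π²/15; moreover the fibre volume over the classical parameter a ∈ [0,1] is V(a) = 8π² a²(1−a)². -/

import Mathlib

open MeasureTheory Real Matrix

/-- The Choi matrix of a real unital qubit channel with classical parameter `a` and free
parameters `(b,c,d,e) ∈ ℝ⁴`. -/
noncomputable def choiRUnital (a : ℝ) (w : Fin 4 → ℝ) : Matrix (Fin 4) (Fin 4) ℝ :=
  !![a, w 0, w 1, w 2;
     w 0, 1 - a, w 3, -(w 1);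
     w 1, w 3, 1 - a, -(w 0);
     w 2, -(w 1), -(w 0), a]

lemma quad_nonneg_iff (α β γ : ℝ) :
    (∀ u v : ℝ, 0 ≤ α*u^2 + 2*γ*(u*v) + β*v^2) ↔ 0 ≤ α ∧ 0 ≤ β ∧ γ^2 ≤ α*β := by
  constructor
  · intro h
    have hα : 0 ≤ α := by have := h 1 0; linarith
    have hβ : 0 ≤ β := by have := h 0 1; linarith
    refine ⟨hα, hβ, ?_⟩
    rcases eq_or_lt_of_le hα with hα0 | hα0
    · have hγ : γ = 0 := by
        by_contra hg
        have := h (-(β+1)/(2*γ)) 1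
        rw [← hα0] at this
        have h2 : 2*γ*(-(β+1)/(2*γ)*1) = -(β+1) := by field_simp
        nlinarith [sq_nonneg ((-(β+1)/(2*γ))), this]
      rw [hγ, ← hα0]; ring_nf; positivity
    · have := h (-γ) α
      have h0 : 0 ≤ α * (α*β - γ^2) := by nlinarith
      nlinarith
  · rintro ⟨hα, hβ, hγ⟩ u v
    rcases eq_or_lt_of_le hα with hα0 | hα0
    · have : γ = 0 := by nlinarith
      rw [this, ← hα0]; ring_nf; positivity
    · nlinarith [sq_nonneg (α*u + γ*v), mul_nonneg (sub_nonneg.2 hγ) (sq_nonneg v)]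

lemma quadForm (a : ℝ) (w x : Fin 4 → ℝ) :
    dotProduct (star x) ((choiRUnital a w) *ᵥ x) =
      a*(x 0)^2 + (1-a)*(x 1)^2 + (1-a)*(x 2)^2 + a*(x 3)^2
      + 2*(w 0)*(x 0*x 1) + 2*(w 1)*(x 0*x 2) + 2*(w 2)*(x 0*x 3)
      + 2*(w 3)*(x 1*x 2) - 2*(w 1)*(x 1*x 3) - 2*(w 0)*(x 2*x 3) := by
  simp [choiRUnital, dotProduct, Matrix.mulVec, Fin.sum_univ_four, Matrix.cons_val_zero,
    Matrix.cons_val_one, Matrix.head_cons]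
  ring

lemma psd_iff (a : ℝ) (w : Fin 4 → ℝ) :
    (choiRUnital a w).PosSemidef ↔
      (0 ≤ a + w 2 ∧ 0 ≤ 1 - a - w 3 ∧ (w 0 - w 1)^2 ≤ (a + w 2)*(1 - a - w 3)) ∧
      (0 ≤ a - w 2 ∧ 0 ≤ 1 - a + w 3 ∧ (w 0 + w 1)^2 ≤ (a - w 2)*(1 - a + w 3)) := by
  rw [Matrix.posSemidef_iff_dotProduct_mulVec]
  constructor
  · rintro ⟨-, h⟩
    have h1 : ∀ u v : ℝ, 0 ≤ (a + w 2)*u^2 + 2*(w 0 - w 1)*(u*v) + (1 - a - w 3)*v^2 := by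
      intro u v
      have := h ![u, v, -v, u]
      rw [quadForm] at this
      simp only [Matrix.cons_val_zero, Matrix.cons_val_one, Matrix.head_cons,
        Matrix.cons_val_two, Matrix.tail_cons, Matrix.cons_val_three] at this
      nlinarith [this]
    have h2 : ∀ u v : ℝ, 0 ≤ (a - w 2)*u^2 + 2*(w 0 + w 1)*(u*v) + (1 - a + w 3)*v^2 := by
      intro u v
      have := h ![u, v, v, -u]
      rw [quadForm] at this
      simp only [Matrix.cons_val_zero, Matrix.cons_val_one, Matrix.head_cons,
        Matrix.cons_val_two, Matrix.tail_cons, Matrix.cons_val_three] at this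
      nlinarith [this]
    exact ⟨(quad_nonneg_iff _ _ _).1 h1, (quad_nonneg_iff _ _ _).1 h2⟩
  · rintro ⟨hA, hB⟩
    constructor
    · ext i j
      fin_cases i <;> fin_cases j <;>
        simp [choiRUnital, Matrix.conjTranspose_apply]
    · intro x
      rw [quadForm]
      have q1 := ((quad_nonneg_iff _ _ _).2 hA) (x 0 + x 3) (x 1 - x 2)
      have q2 := ((quad_nonneg_iff _ _ _).2 hB) (x 0 - x 3) (x 1 + x 2)
      nlinarith [q1, q2]

lemma semicircle_integral (r : ℝ) (hr : 0 ≤ r) :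
    ∫ x in (-r)..r, Real.sqrt (r^2 - x^2) = π * r^2 / 2 := by
  rcases eq_or_lt_of_le hr with h0 | h0
  · simp [← h0]
  · have hne : r ≠ 0 := ne_of_gt h0
    have key := intervalIntegral.integral_comp_mul_left
      (a := (-1:ℝ)) (b := 1) (fun y => Real.sqrt (r^2 - y^2)) hne
    have lhs : (∫ t in (-1:ℝ)..1, Real.sqrt (r^2 - (r*t)^2))
        = ∫ t in (-1:ℝ)..1, r * Real.sqrt (1 - t^2) := by
      apply intervalIntegral.integral_congr
      intro t _
      show Real.sqrt (r^2 - (r*t)^2) = r * Real.sqrt (1 - t^2)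
      have h : r^2 - (r*t)^2 = r^2 * (1 - t^2) := by ring
      rw [h, Real.sqrt_mul (sq_nonneg r), Real.sqrt_sq hr]
    rw [lhs] at key
    rw [intervalIntegral.integral_const_mul, integral_sqrt_one_sub_sq] at key
    have : (∫ x in (-r)..r, Real.sqrt (r^2 - x^2)) = r * (r * (π/2)) := by
      rw [mul_neg_one r, mul_one, smul_eq_mul] at key
      field_simp at key ⊢
      nlinarith [key]
    rw [this]; ring

lemma sqrt_lintegral (r c : ℝ) (hr : 0 ≤ r) (hc : 0 ≤ c) :
    ∫⁻ x in Set.Icc (-r) r, ENNReal.ofReal (c * Real.sqrt (r^2 - x^2)) =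
      ENNReal.ofReal (c * (π * r^2 / 2)) := by
  have hcont : Continuous fun x : ℝ => c * Real.sqrt (r^2 - x^2) :=
    continuous_const.mul ((continuous_const.sub (continuous_pow 2)).sqrt)
  rw [← MeasureTheory.ofReal_integral_eq_lintegral_ofReal
      (hcont.integrableOn_Icc)
      (Filter.Eventually.of_forall fun x => mul_nonneg hc (Real.sqrt_nonneg _))]
  congr 1
  rw [MeasureTheory.integral_Icc_eq_integral_Ioc,
    ← intervalIntegral.integral_of_le (by linarith : -r ≤ r),
    intervalIntegral.integral_const_mul, semicircle_integral r hr]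



def goodSet (a : ℝ) : Set (ℝ × ℝ × ℝ × ℝ) :=
  {x | 0 ≤ a + x.1 ∧ 0 ≤ a - x.1 ∧ 0 ≤ 1 - a - x.2.1 ∧ 0 ≤ 1 - a + x.2.1 ∧
       x.2.2.1^2 ≤ (a + x.1)*(1 - a - x.2.1) ∧ x.2.2.2^2 ≤ (a - x.1)*(1 - a + x.2.1)}

lemma measurableSet_goodSet (a : ℝ) : MeasurableSet (goodSet a) := by
  unfold goodSet
  apply MeasurableSet.inter
  · exact measurableSet_le measurable_const (measurable_const.add measurable_fst)
  apply MeasurableSet.inter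
  · exact measurableSet_le measurable_const (measurable_const.sub measurable_fst)
  apply MeasurableSet.inter
  · exact measurableSet_le measurable_const
      (measurable_const.sub (measurable_fst.comp measurable_snd))
  apply MeasurableSet.inter
  · exact measurableSet_le measurable_const
      (measurable_const.add (measurable_fst.comp measurable_snd))
  apply MeasurableSet.inter
  · exact measurableSet_le
      ((measurable_fst.comp (measurable_snd.comp measurable_snd)).pow_const 2)
      (((measurable_const.add measurable_fst)).mul
        (measurable_const.sub (measurable_fst.comp measurable_snd)))
  · exact measurableSet_le
      ((measurable_snd.comp (measurable_snd.comp measurable_snd)).pow_const 2)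
      (((measurable_const.sub measurable_fst)).mul
        (measurable_const.add (measurable_fst.comp measurable_snd)))

lemma sq_le_iff_Icc {A p : ℝ} (hA : 0 ≤ A) : p^2 ≤ A ↔ p ∈ Set.Icc (-Real.sqrt A) (Real.sqrt A) := by
  have h1 := Real.sq_sqrt hA
  have h2 := Real.sqrt_nonneg A
  constructor
  · intro h
    constructor <;> nlinarith [sq_nonneg (p - Real.sqrt A), sq_nonneg (p + Real.sqrt A)]
  · rintro ⟨h3, h4⟩
    nlinarith

lemma volume_goodSet (a : ℝ) (ha : a ∈ Set.Icc (0:ℝ) 1) :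
    volume (goodSet a) = ENNReal.ofReal (π^2 * (a^2 * (1-a)^2)) := by
  obtain ⟨ha0, ha1⟩ := ha
  have hmeas := measurableSet_goodSet a
  rw [MeasureTheory.Measure.volume_eq_prod, Measure.prod_apply hmeas]
  have step1 : ∀ d : ℝ, volume (Prod.mk d ⁻¹' goodSet a) =
      Set.indicator (Set.Icc (-a) a)
        (fun d => ENNReal.ofReal ((2*π*(1-a)^2) * Real.sqrt (a^2 - d^2))) d := by
    intro d
    by_cases hd : d ∈ Set.Icc (-a) a
    · rw [Set.indicator_of_mem hd]
      obtain ⟨hd1, hd2⟩ := hd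
      have had1 : 0 ≤ a + d := by linarith
      have had2 : 0 ≤ a - d := by linarith
      have hBmeas : MeasurableSet (Prod.mk d ⁻¹' goodSet a) :=
        hmeas.preimage measurable_prodMk_left
      rw [MeasureTheory.Measure.volume_eq_prod, Measure.prod_apply hBmeas]
      have step2 : ∀ e : ℝ, volume (Prod.mk e ⁻¹' (Prod.mk d ⁻¹' goodSet a)) =
          Set.indicator (Set.Icc (-(1-a)) (1-a))
            (fun e => ENNReal.ofReal ((4 * Real.sqrt (a^2 - d^2)) *
              Real.sqrt ((1-a)^2 - e^2))) e := by
        intro e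
        by_cases he : e ∈ Set.Icc (-(1-a)) (1-a)
        · rw [Set.indicator_of_mem he]
          obtain ⟨he1, he2⟩ := he
          have hae1 : 0 ≤ 1 - a - e := by linarith
          have hae2 : 0 ≤ 1 - a + e := by linarith
          have hA' : 0 ≤ (a + d)*(1 - a - e) := mul_nonneg had1 hae1
          have hB' : 0 ≤ (a - d)*(1 - a + e) := mul_nonneg had2 hae2
          have hset : Prod.mk e ⁻¹' (Prod.mk d ⁻¹' goodSet a) =
              (Set.Icc (-Real.sqrt ((a + d)*(1 - a - e))) (Real.sqrt ((a + d)*(1 - a - e)))) ×ˢ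
              (Set.Icc (-Real.sqrt ((a - d)*(1 - a + e))) (Real.sqrt ((a - d)*(1 - a + e)))) := by
            ext z
            simp only [goodSet, Set.mem_preimage, Set.mem_setOf_eq, Set.mem_prod,
              sq_le_iff_Icc hA', sq_le_iff_Icc hB']
            tauto
          rw [hset, MeasureTheory.Measure.volume_eq_prod, Measure.prod_prod, Real.volume_Icc,
            Real.volume_Icc, sub_neg_eq_add, sub_neg_eq_add]
          rw [← ENNReal.ofReal_mul (by positivity)]
          congr 1
          have e1 : Real.sqrt ((a + d)*(1 - a - e)) * Real.sqrt ((a - d)*(1 - a + e)) =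
              Real.sqrt (a^2 - d^2) * Real.sqrt ((1-a)^2 - e^2) := by
            rw [← Real.sqrt_mul hA', ← Real.sqrt_mul (by nlinarith : (0:ℝ) ≤ a^2 - d^2)]
            congr 1
            ring
          nlinarith [e1, Real.sqrt_nonneg ((a + d)*(1 - a - e)),
            Real.sqrt_nonneg ((a - d)*(1 - a + e))]
        · rw [Set.indicator_of_notMem he]
          convert measure_empty
          · ext z
            simp only [goodSet, Set.mem_preimage, Set.mem_setOf_eq, Set.mem_empty_iff_false,
              iff_false]
            rintro ⟨-, -, h3, h4, -, -⟩
            exact he ⟨by linarith, by linarith⟩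
          · infer_instance
      calc (∫⁻ e, volume (Prod.mk e ⁻¹' (Prod.mk d ⁻¹' goodSet a)))
          = ∫⁻ e, Set.indicator (Set.Icc (-(1-a)) (1-a))
            (fun e => ENNReal.ofReal ((4 * Real.sqrt (a^2 - d^2)) *
              Real.sqrt ((1-a)^2 - e^2))) e := by exact lintegral_congr step2
        _ = ∫⁻ e in Set.Icc (-(1-a)) (1-a),
              ENNReal.ofReal ((4 * Real.sqrt (a^2 - d^2)) * Real.sqrt ((1-a)^2 - e^2)) := by
            rw [lintegral_indicator measurableSet_Icc _]
        _ = ENNReal.ofReal ((4 * Real.sqrt (a^2 - d^2)) * (π * (1-a)^2 / 2)) := by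
            exact sqrt_lintegral (1-a) _ (by linarith) (by positivity)
        _ = ENNReal.ofReal ((2*π*(1-a)^2) * Real.sqrt (a^2 - d^2)) := by
            congr 1; ring
    · rw [Set.indicator_of_notMem hd]
      convert measure_empty
      · ext z
        simp only [goodSet, Set.mem_preimage, Set.mem_setOf_eq, Set.mem_empty_iff_false,
          iff_false]
        rintro ⟨h1, h2, -⟩
        exact hd ⟨by linarith, by linarith⟩
      · infer_instance
  calc (∫⁻ d, volume (Prod.mk d ⁻¹' goodSet a))
      = ∫⁻ d, Set.indicator (Set.Icc (-a) a)
          (fun d => ENNReal.ofReal ((2*π*(1-a)^2) * Real.sqrt (a^2 - d^2))) d :=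
        lintegral_congr step1
    _ = ∫⁻ d in Set.Icc (-a) a,
          ENNReal.ofReal ((2*π*(1-a)^2) * Real.sqrt (a^2 - d^2)) := by
        rw [lintegral_indicator measurableSet_Icc _]
    _ = ENNReal.ofReal ((2*π*(1-a)^2) * (π * a^2 / 2)) :=
        sqrt_lintegral a _ ha0 (by positivity)
    _ = ENNReal.ofReal (π^2 * (a^2 * (1-a)^2)) := by congr 1; ring

noncomputable def split4 : (Fin 4 → ℝ) → ℝ × ℝ × ℝ × ℝ :=
  Prod.map id (Prod.map id (Prod.map id (MeasurableEquiv.funUnique (Fin 1) ℝ)))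
    ∘ Prod.map id (Prod.map id (MeasurableEquiv.piFinSuccAbove (fun _ => ℝ) 0))
    ∘ Prod.map id (MeasurableEquiv.piFinSuccAbove (fun _ => ℝ) 0)
    ∘ (MeasurableEquiv.piFinSuccAbove (fun _ => ℝ) 0)

lemma split4_mp : MeasurePreserving split4 volume volume := by
  have h1 := volume_preserving_piFinSuccAbove (fun _ : Fin 4 => ℝ) 0
  have h2 := volume_preserving_piFinSuccAbove (fun _ : Fin 3 => ℝ) 0
  have h3 := volume_preserving_piFinSuccAbove (fun _ : Fin 2 => ℝ) 0
  have h4 := volume_preserving_funUnique (Fin 1) ℝ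
  have idp : MeasurePreserving (id : ℝ → ℝ) volume volume := MeasurePreserving.id _
  exact ((idp.prod (idp.prod (idp.prod h4))).comp
    ((idp.prod (idp.prod h3)).comp ((idp.prod h2).comp h1)))

lemma split4_apply (w : Fin 4 → ℝ) : split4 w = (w 0, w 1, w 2, w 3) := by
  simp [split4, MeasurableEquiv.piFinSuccAbove_apply, MeasurableEquiv.funUnique_apply,
    Fin.succAbove, Prod.map, Fin.tail, show (Fin.succ 2 : Fin 4) = 3 from rfl]

noncomputable def Lmap : (Fin 4 → ℝ) →ₗ[ℝ] (Fin 4 → ℝ) :=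
  Matrix.mulVecLin !![0,0,1,0; 0,0,0,1; 1,-1,0,0; 1,1,0,0]

lemma Lmap_det : LinearMap.det Lmap = 2 := by
  rw [Lmap, ← Matrix.toLin'_apply', LinearMap.det_toLin']
  simp [Matrix.det_succ_row_zero, Fin.sum_univ_succ, Fin.succAbove]
  norm_num

lemma Lmap_apply (w : Fin 4 → ℝ) :
    Lmap w = ![w 2, w 3, w 0 - w 1, w 0 + w 1] := by
  funext i
  fin_cases i <;>
    simp [Lmap, Matrix.mulVecLin_apply, Matrix.mulVec, dotProduct, Fin.sum_univ_four] <;> ring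

lemma fiber_volume (a : ℝ) (ha : a ∈ Set.Icc (0:ℝ) 1) :
    volume {w : Fin 4 → ℝ | (choiRUnital a w).PosSemidef} =
      ENNReal.ofReal (π^2 * (a^2 * (1-a)^2) / 2) := by
  have hset : {w : Fin 4 → ℝ | (choiRUnital a w).PosSemidef} =
      Lmap ⁻¹' (split4 ⁻¹' goodSet a) := by
    ext w
    rw [Set.mem_setOf_eq, psd_iff, Set.mem_preimage, Set.mem_preimage, Lmap_apply, split4_apply]
    simp only [Matrix.cons_val_zero, Matrix.cons_val_one, Matrix.head_cons,
      Matrix.cons_val_two, Matrix.tail_cons, Matrix.cons_val_three, goodSet, Set.mem_setOf_eq]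
    tauto
  rw [hset, Measure.addHaar_preimage_linearMap volume (by rw [Lmap_det]; norm_num),
    Lmap_det, split4_mp.measure_preimage (measurableSet_goodSet a).nullMeasurableSet,
    volume_goodSet a ha]
  rw [← ENNReal.ofReal_mul (by norm_num)]
  congr 1
  rw [abs_of_nonneg (by norm_num : (0:ℝ) ≤ (2:ℝ)⁻¹)]
  ring

lemma fiber_empty (a : ℝ) (ha : a ∉ Set.Icc (0:ℝ) 1) :
    {w : Fin 4 → ℝ | (choiRUnital a w).PosSemidef} = ∅ := by
  ext w
  simp only [Set.mem_setOf_eq, Set.mem_empty_iff_false, iff_false]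
  intro h
  rw [psd_iff] at h
  obtain ⟨⟨h1, h2, -⟩, h3, h4, -⟩ := h
  exact ha ⟨by linarith, by linarith⟩

lemma poly_int : ∫ x in (0:ℝ)..1, π^2 * (x^2*(1-x)^2) / 2 = π^2/60 := by
  have hfun : Set.EqOn (fun x : ℝ => π^2 * (x^2*(1-x)^2) / 2)
      (fun x : ℝ => (π^2/2) * (x^2 - 2*x^3 + x^4)) (Set.uIcc 0 1) := by
    intro x _; ring
  rw [intervalIntegral.integral_congr hfun, intervalIntegral.integral_const_mul]
  have h2 : IntervalIntegrable (fun x : ℝ => x^2) volume 0 1 :=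
    intervalIntegral.intervalIntegrable_pow 2
  have h3 : IntervalIntegrable (fun x : ℝ => 2*x^3) volume 0 1 :=
    (intervalIntegral.intervalIntegrable_pow 3).const_mul 2
  have h4 : IntervalIntegrable (fun x : ℝ => x^4) volume 0 1 :=
    intervalIntegral.intervalIntegrable_pow 4
  rw [intervalIntegral.integral_add (h2.sub h3) h4, intervalIntegral.integral_sub h2 h3,
    intervalIntegral.integral_const_mul, integral_pow, integral_pow, integral_pow]
  norm_num
  ring

/-- The volume of the space of real unital qubit channels `𝒬_ℝ¹ ⊆ ℝ⁵` (volume element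
`2⁴ dλ₅`) equals `4π²/15`, and the fibre volume over `a ∈ [0,1]` is `V(a) = 8π² a²(1-a)²`. -/
theorem stmt_16 :
    2 ^ 4 * volume {v : ℝ × (Fin 4 → ℝ) | (choiRUnital v.1 v.2).PosSemidef} =
        ENNReal.ofReal (4 * π ^ 2 / 15) ∧
      ∀ a ∈ Set.Icc (0 : ℝ) 1,
        2 ^ 4 * volume {w : Fin 4 → ℝ | (choiRUnital a w).PosSemidef} =
          ENNReal.ofReal (8 * π ^ 2 * a ^ 2 * (1 - a) ^ 2) := by
  have h16 : ((2:ENNReal)^4) = ENNReal.ofReal 16 := by norm_num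
  constructor
  · have hS5 : MeasurableSet {v : ℝ × (Fin 4 → ℝ) | (choiRUnital v.1 v.2).PosSemidef} := by
      have hrw : {v : ℝ × (Fin 4 → ℝ) | (choiRUnital v.1 v.2).PosSemidef} =
          {v : ℝ × (Fin 4 → ℝ) |
            (0 ≤ v.1 + v.2 2 ∧ 0 ≤ 1 - v.1 - v.2 3 ∧
              (v.2 0 - v.2 1)^2 ≤ (v.1 + v.2 2)*(1 - v.1 - v.2 3)) ∧
            (0 ≤ v.1 - v.2 2 ∧ 0 ≤ 1 - v.1 + v.2 3 ∧
              (v.2 0 + v.2 1)^2 ≤ (v.1 - v.2 2)*(1 - v.1 + v.2 3))} :=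
        Set.ext fun v => psd_iff v.1 v.2
      rw [hrw]
      have m1 : Measurable fun v : ℝ × (Fin 4 → ℝ) => v.1 := measurable_fst
      have mw : ∀ i, Measurable fun v : ℝ × (Fin 4 → ℝ) => v.2 i :=
        fun i => (measurable_pi_apply i).comp measurable_snd
      refine MeasurableSet.inter (MeasurableSet.inter ?_ (MeasurableSet.inter ?_ ?_))
        (MeasurableSet.inter ?_ (MeasurableSet.inter ?_ ?_))
      · exact measurableSet_le measurable_const (m1.add (mw 2))
      · exact measurableSet_le measurable_const
          ((measurable_const.sub m1).sub (mw 3))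
      · exact measurableSet_le (((mw 0).sub (mw 1)).pow_const 2)
          ((m1.add (mw 2)).mul ((measurable_const.sub m1).sub (mw 3)))
      · exact measurableSet_le measurable_const (m1.sub (mw 2))
      · exact measurableSet_le measurable_const
          ((measurable_const.sub m1).add (mw 3))
      · exact measurableSet_le (((mw 0).add (mw 1)).pow_const 2)
          ((m1.sub (mw 2)).mul ((measurable_const.sub m1).add (mw 3)))
    rw [Measure.volume_eq_prod, Measure.prod_apply hS5]
    have hcont : Continuous fun a : ℝ => π^2 * (a^2*(1-a)^2) / 2 := by continuity
    calc (2:ENNReal) ^ 4 * ∫⁻ a, volume (Prod.mk a ⁻¹'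
            {v : ℝ × (Fin 4 → ℝ) | (choiRUnital v.1 v.2).PosSemidef})
        = 2 ^ 4 * ∫⁻ a, Set.indicator (Set.Icc (0:ℝ) 1)
            (fun a => ENNReal.ofReal (π^2 * (a^2*(1-a)^2) / 2)) a := by
          congr 1
          refine lintegral_congr fun a => ?_
          have hsl : (Prod.mk a ⁻¹'
              {v : ℝ × (Fin 4 → ℝ) | (choiRUnital v.1 v.2).PosSemidef}) =
              {w : Fin 4 → ℝ | (choiRUnital a w).PosSemidef} := rfl
          by_cases ha : a ∈ Set.Icc (0:ℝ) 1
          · rw [hsl, fiber_volume a ha, Set.indicator_of_mem ha]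
          · rw [hsl, fiber_empty a ha, Set.indicator_of_notMem ha, measure_empty]
      _ = 2 ^ 4 * ∫⁻ a in Set.Icc (0:ℝ) 1,
            ENNReal.ofReal (π^2 * (a^2*(1-a)^2) / 2) := by
          rw [lintegral_indicator measurableSet_Icc _]
      _ = 2 ^ 4 * ENNReal.ofReal (∫ a in Set.Icc (0:ℝ) 1, π^2 * (a^2*(1-a)^2) / 2) := by
          rw [← MeasureTheory.ofReal_integral_eq_lintegral_ofReal hcont.integrableOn_Icc
            (Filter.Eventually.of_forall fun x => by positivity)]
      _ = ENNReal.ofReal (4 * π ^ 2 / 15) := by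
          rw [MeasureTheory.integral_Icc_eq_integral_Ioc,
            ← intervalIntegral.integral_of_le (zero_le_one), poly_int, h16,
            ← ENNReal.ofReal_mul (by norm_num)]
          congr 1
          ring
  · intro a ha
    rw [fiber_volume a ha, h16, ← ENNReal.ofReal_mul (by norm_num)]
    congr 1
    ring
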